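/- Assume (H1)–(H3) and (A1), and let u₋ be a viscosity solution of H(x, ∂ₓu, u) = 0. Then there exist δ₀ > 0 and m > 0 such that the function ω₁(x,t) = u₋(x) − δ₀ e^{−mt} is a viscosity subsolution of the evolution equation ∂ₜw + H(x, ∂ₓw, w) = 0 on M × (0,∞), and the function ω₂(x,t) = u₋(x) + δ₀ e^{−mt} is a viscosity supersolution of the same equation. -/

import Mathlib

/-!
Framework: contact Hamiltonian systems on a closed manifold.

`M` is a closed (compact, boundaryless), connected smooth manifold modelled on a
finite-dimensional real normed space `E`.  Using the canonical identification
`TangentSpace I x = E`, a contact Hamiltonian is a function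
`H : M → (E →L[ℝ] ℝ) → ℝ → ℝ`, i.e. a function on `T*M × ℝ`.
-/

noncomputable section

open scoped Manifold Topology NNReal
open Filter Set

variable {E : Type*} [NormedAddCommGroup E] [NormedSpace ℝ E] [FiniteDimensional ℝ E]
variable {M : Type*} [MetricSpace M] [CompactSpace M] [ConnectedSpace M]
  [ChartedSpace E M]
variable (I : ModelWithCorners ℝ E E) [IsManifold I (⊤ : ℕ∞) M] [I.Boundaryless]

section Defs

variable (H : M → (E →L[ℝ] ℝ) → ℝ → ℝ)

/-- Viscosity subsolution (Crandall–Lions) of the stationary equation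
`H(x, ∂ₓu(x), u(x)) = 0` on `M`. -/
def IsVSubStat (u : M → ℝ) : Prop :=
  Continuous u ∧
    ∀ ψ : M → ℝ, ContMDiff I 𝓘(ℝ, ℝ) 1 ψ → ∀ x₀ : M,
      IsLocalMax (fun x => u x - ψ x) x₀ →
        H x₀ (mfderiv I 𝓘(ℝ, ℝ) ψ x₀) (u x₀) ≤ 0

/-- Viscosity supersolution of the stationary equation `H(x, ∂ₓu(x), u(x)) = 0` on `M`. -/
def IsVSupStat (u : M → ℝ) : Prop :=
  Continuous u ∧
    ∀ ψ : M → ℝ, ContMDiff I 𝓘(ℝ, ℝ) 1 ψ → ∀ x₀ : M,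
      IsLocalMin (fun x => u x - ψ x) x₀ →
        0 ≤ H x₀ (mfderiv I 𝓘(ℝ, ℝ) ψ x₀) (u x₀)

/-- Viscosity solution of `H(x, ∂ₓu(x), u(x)) = 0` on `M`. -/
def IsVSolStat (u : M → ℝ) : Prop := IsVSubStat I H u ∧ IsVSupStat I H u

/-- `𝒮⁻`, the set of viscosity solutions of `H(x, ∂ₓu, u) = 0`. -/
def Sminus : Set (M → ℝ) := {u | IsVSolStat I H u}

/-- `𝒮⁺`, the set of viscosity solutions of `H(x, -∂ₓv, -v) = 0`. -/
def Splus : Set (M → ℝ) := {v | IsVSolStat I (fun x p r => H x (-p) (-r)) v}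

/-- Viscosity subsolution of the evolution equation `∂ₜw + H(x, ∂ₓw, w) = 0`
on `M × (0, ∞)`. -/
def IsVSubEvol (w : M → ℝ → ℝ) : Prop :=
  ContinuousOn (fun q : M × ℝ => w q.1 q.2) (univ ×ˢ Ici 0) ∧
    ∀ ψ : M → ℝ → ℝ,
      ContMDiff (I.prod 𝓘(ℝ, ℝ)) 𝓘(ℝ, ℝ) 1 (fun q : M × ℝ => ψ q.1 q.2) →
      ∀ (x₀ : M) (t₀ : ℝ), 0 < t₀ →
        IsLocalMax (fun q : M × ℝ => w q.1 q.2 - ψ q.1 q.2) (x₀, t₀) →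
        deriv (fun s => ψ x₀ s) t₀ +
          H x₀ (mfderiv I 𝓘(ℝ, ℝ) (fun y => ψ y t₀) x₀) (w x₀ t₀) ≤ 0

/-- Viscosity supersolution of the evolution equation `∂ₜw + H(x, ∂ₓw, w) = 0`
on `M × (0, ∞)`. -/
def IsVSupEvol (w : M → ℝ → ℝ) : Prop :=
  ContinuousOn (fun q : M × ℝ => w q.1 q.2) (univ ×ˢ Ici 0) ∧
    ∀ ψ : M → ℝ → ℝ,
      ContMDiff (I.prod 𝓘(ℝ, ℝ)) 𝓘(ℝ, ℝ) 1 (fun q : M × ℝ => ψ q.1 q.2) →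
      ∀ (x₀ : M) (t₀ : ℝ), 0 < t₀ →
        IsLocalMin (fun q : M × ℝ => w q.1 q.2 - ψ q.1 q.2) (x₀, t₀) →
        0 ≤ deriv (fun s => ψ x₀ s) t₀ +
          H x₀ (mfderiv I 𝓘(ℝ, ℝ) (fun y => ψ y t₀) x₀) (w x₀ t₀)

/-- Viscosity solution of the evolution equation `∂ₜw + H(x, ∂ₓw, w) = 0`. -/
def IsVSolEvol (w : M → ℝ → ℝ) : Prop := IsVSubEvol I H w ∧ IsVSupEvol I H w

/-- (H1): the fiberwise Hessian `∂²H/∂p²` is positive definite. -/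
def CondH1 : Prop :=
  ∀ (x : M) (r : ℝ) (p v : E →L[ℝ] ℝ), v ≠ 0 →
    0 < iteratedFDeriv ℝ 2 (fun q => H x q r) p ![v, v]

/-- (H2): `H(x, ·, u)` is superlinear for each `(x, u)`. -/
def CondH2 : Prop :=
  ∀ (x : M) (r K : ℝ), ∃ C : ℝ, ∀ p : E →L[ℝ] ℝ, K * ‖p‖ - C ≤ H x p r

/-- (H3): `|∂H/∂u| ≤ κ` for some `κ > 0`. -/
def CondH3 : Prop :=
  ∃ κ : ℝ, 0 < κ ∧ ∀ (x : M) (p : E →L[ℝ] ℝ) (r : ℝ),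
    |deriv (fun s => H x p s) r| ≤ κ

/-- `H` is `C³` on `T*M × ℝ`. -/
def CondC3 : Prop :=
  ContMDiff (I.prod 𝓘(ℝ, (E →L[ℝ] ℝ) × ℝ)) 𝓘(ℝ, ℝ) 3
    (fun q : M × ((E →L[ℝ] ℝ) × ℝ) => H q.1 q.2.1 q.2.2)

/-- (A1): `∂H/∂u > 0` on the zero level set `{H = 0}`. -/
def CondA1 : Prop :=
  ∀ (x : M) (p : E →L[ℝ] ℝ) (r : ℝ), H x p r = 0 → 0 < deriv (fun s => H x p s) r

/-- (A2): `∂H/∂u ≥ 0` everywhere. -/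
def CondA2 : Prop :=
  ∀ (x : M) (p : E →L[ℝ] ℝ) (r : ℝ), 0 ≤ deriv (fun s => H x p s) r

/-- The backward and forward Lax–Oleinik semigroups `T_t⁻`, `T_t⁺` associated with `H`:
`(x, t) ↦ T_t⁻φ(x)` is the unique viscosity solution of `∂ₜw + H(x, ∂ₓw, w) = 0` with
initial condition `φ`, and `(x, t) ↦ -T_t⁺φ(x)` is the unique viscosity solution of the
dual equation `∂ₜw + H(x, -∂ₓw, -w) = 0` with initial condition `-φ`. -/
structure LaxOleinik where
  Tm : ℝ → (M → ℝ) → M → ℝ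
  Tp : ℝ → (M → ℝ) → M → ℝ
  Tm_init : ∀ φ : M → ℝ, Continuous φ → ∀ x : M, Tm 0 φ x = φ x
  Tm_sol : ∀ φ : M → ℝ, Continuous φ → IsVSolEvol I H (fun x t => Tm t φ x)
  Tm_unique : ∀ φ : M → ℝ, Continuous φ → ∀ w : M → ℝ → ℝ, IsVSolEvol I H w →
    (∀ x : M, w x 0 = φ x) → ∀ x : M, ∀ t : ℝ, 0 ≤ t → w x t = Tm t φ x
  Tp_init : ∀ φ : M → ℝ, Continuous φ → ∀ x : M, Tp 0 φ x = φ x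
  Tp_sol : ∀ φ : M → ℝ, Continuous φ →
    IsVSolEvol I (fun x p r => H x (-p) (-r)) (fun x t => - Tp t φ x)
  Tp_unique : ∀ φ : M → ℝ, Continuous φ → ∀ w : M → ℝ → ℝ,
    IsVSolEvol I (fun x p r => H x (-p) (-r)) w →
    (∀ x : M, w x 0 = - φ x) → ∀ x : M, ∀ t : ℝ, 0 ≤ t → w x t = - Tp t φ x

/-- The implicit action function `h_{x₀,u₀}(x,t)` of Wang–Wang–Yan, characterized here
through the Markov-type property `h_{x₀,u₀}(x, t+s) = T_s⁻ h_{x₀,u₀}(·,t)(x)`. -/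
structure ImplicitAction (S : LaxOleinik I H) where
  h : M → ℝ → M → ℝ → ℝ
  cont : ContinuousOn (fun q : (M × ℝ) × M × ℝ => h q.1.1 q.1.2 q.2.1 q.2.2)
    {q : (M × ℝ) × M × ℝ | 0 < q.2.2}
  markov : ∀ (x₀ : M) (u₀ : ℝ) (t s : ℝ), 0 < t → 0 ≤ s →
    ∀ x : M, h x₀ u₀ x (t + s) = S.Tm s (fun y => h x₀ u₀ y t) x

/-- The contact Lagrangian `L(x, v, u)`, dual to `H` via the fiberwise Legendre
transform: `L(x,v,u) = sup_p (⟨p, v⟩ - H(x,p,u))`. -/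
def Ldual (x : M) (v : E) (r : ℝ) : ℝ :=
  sSup {a : ℝ | ∃ p : E →L[ℝ] ℝ, a = p v - H x p r}

end Defs

/-- The velocity `ẋ(t) ∈ T_{x(t)}M = E` of a curve `x : ℝ → M`. -/
def velocity (x : ℝ → M) (t : ℝ) : E := mfderiv 𝓘(ℝ, ℝ) I x t (1 : ℝ)

/-- The manifold differential of a real function on `M`, viewed in `E* = E →L[ℝ] ℝ`
via the canonical identification `TangentSpace I x = E`. -/
def covector (u : M → ℝ) (x : M) : E →L[ℝ] ℝ := mfderiv I 𝓘(ℝ, ℝ) u x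

section Defs2

variable (H : M → (E →L[ℝ] ℝ) → ℝ → ℝ)

/-- `(x(t), p(t), u(t))`, `t ∈ s`, is an orbit of the contact Hamiltonian flow `Φ_t^H`:
`ẋ = ∂H/∂p`, `ṗ = -∂H/∂x - (∂H/∂u)p`, `u̇ = p·∂H/∂p - H`
(in the canonical identification `T*M ≃ M × (E →L[ℝ] ℝ)`). -/
def IsContactOrbitOn (x : ℝ → M) (p : ℝ → E →L[ℝ] ℝ) (u : ℝ → ℝ) (s : Set ℝ) : Prop :=
  ∀ t ∈ s,
    (∀ q : E →L[ℝ] ℝ,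
      fderiv ℝ (fun q' => H (x t) q' (u t)) (p t) q = q (velocity I x t)) ∧
    HasDerivAt p
      (-(covector I (fun y => H y (p t) (u t)) (x t))
        - deriv (fun r => H (x t) (p t) r) (u t) • p t) t ∧
    HasDerivAt u (p t (velocity I x t) - H (x t) (p t) (u t)) t

variable {S : LaxOleinik I H}

/-- A positive globally minimizing curve (Definition 3.1): locally Lipschitz on `[0,∞)`
with `u(t₂) = h_{x(t₁),u(t₁)}(x(t₂), t₂ - t₁)` for all `0 ≤ t₁ < t₂`. -/
def PosGlobMin (A : ImplicitAction I H S) (x : ℝ → M) (u : ℝ → ℝ) : Prop :=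
  (∀ a b : ℝ, 0 ≤ a → ∃ K : ℝ≥0, LipschitzOnWith K (fun t => (x t, u t)) (Icc a b)) ∧
    ∀ t₁ t₂ : ℝ, 0 ≤ t₁ → t₁ < t₂ → u t₂ = A.h (x t₁) (u t₁) (x t₂) (t₂ - t₁)

/-- A globally minimizing curve on all of `ℝ`. -/
def GlobMin (A : ImplicitAction I H S) (x : ℝ → M) (u : ℝ → ℝ) : Prop :=
  (∀ a b : ℝ, ∃ K : ℝ≥0, LipschitzOnWith K (fun t => (x t, u t)) (Icc a b)) ∧
    ∀ t₁ t₂ : ℝ, t₁ < t₂ → u t₂ = A.h (x t₁) (u t₁) (x t₂) (t₂ - t₁)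

/-- A semi-static curve: globally minimizing and
`u(t₂) = inf_{s>0} h_{x(t₁),u(t₁)}(x(t₂), s)` for all `t₁ ≤ t₂`. -/
def SemiStatic (A : ImplicitAction I H S) (x : ℝ → M) (u : ℝ → ℝ) : Prop :=
  GlobMin I H A x u ∧
    ∀ t₁ t₂ : ℝ, t₁ ≤ t₂ →
      u t₂ = sInf {a : ℝ | ∃ s : ℝ, 0 < s ∧ a = A.h (x t₁) (u t₁) (x t₂) s}

/-- The momentum along a positively globally minimizing curve:
`p(t) = ∂L/∂v(x(t), ẋ(t), u(t))`. A positive globally minimizing orbit is a positive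
globally minimizing curve together with this momentum. -/
def PosGlobMinOrbit (A : ImplicitAction I H S) (x : ℝ → M) (p : ℝ → E →L[ℝ] ℝ)
    (u : ℝ → ℝ) : Prop :=
  PosGlobMin I H A x u ∧
    ∀ t : ℝ, 0 ≤ t →
      p t = fderiv ℝ (fun v => Ldual H (x t) v (u t)) (velocity I x t)

/-- `Λ_{u₋}`: the closure of the 1-graph of `u₋` over its differentiability points. -/
def LambdaSet (um : M → ℝ) : Set (M × (E →L[ℝ] ℝ) × ℝ) :=
  closure {z | ∃ x : M, MDifferentiableAt I 𝓘(ℝ, ℝ) um x ∧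
    z = (x, covector I um x, um x)}

/-- The Mañé set `𝒩̃_{u₋}` associated with `u₋` and `u₊ = lim_{t→∞} T_t⁺u₋`:
`{(x,p,u) : u = u₋(x) = u₊(x), p = d_xu₋(x) = d_xu₊(x)}`. -/
def ManeSet (um up : M → ℝ) : Set (M × (E →L[ℝ] ℝ) × ℝ) :=
  {z | z.2.2 = um z.1 ∧ z.2.2 = up z.1 ∧
    MDifferentiableAt I 𝓘(ℝ, ℝ) um z.1 ∧ MDifferentiableAt I 𝓘(ℝ, ℝ) up z.1 ∧
    z.2.1 = covector I um z.1 ∧ z.2.1 = covector I up z.1}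

end Defs2

/-- The ω-limit set of a curve `γ(t)` as `t → +∞`: the set of its cluster points. -/
def omegaSet {X : Type*} [TopologicalSpace X] (γ : ℝ → X) : Set X :=
  {z | MapClusterPt z atTop γ}


set_option linter.unusedSectionVars false
set_option maxHeartbeats 2000000

section AuxLemmas

variable {E : Type*} [NormedAddCommGroup E] [NormedSpace ℝ E] [FiniteDimensional ℝ E]
variable {M : Type*} [MetricSpace M] [CompactSpace M] [ConnectedSpace M]
  [ChartedSpace E M]
variable {I : ModelWithCorners ℝ E E} [IsManifold I (⊤ : ℕ∞) M] [I.Boundaryless]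
variable {H : M → (E →L[ℝ] ℝ) → ℝ → ℝ}


lemma aux_contDiff_pr (hC3 : CondC3 I H) (x : M) :
    ContDiff ℝ 3 (fun q : (E →L[ℝ] ℝ) × ℝ => H x q.1 q.2) := by
  have h := hC3.comp ((contMDiff_const (c := x)).prodMk
    (contMDiff_id (I := 𝓘(ℝ, (E →L[ℝ] ℝ) × ℝ))))
  exact contMDiff_iff_contDiff.mp h

lemma aux_cont (hC3 : CondC3 I H) :
    Continuous (fun z : M × (E →L[ℝ] ℝ) × ℝ => H z.1 z.2.1 z.2.2) := hC3.continuous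

lemma aux_contD (hC3 : CondC3 I H) :
    Continuous (fun z : M × (E →L[ℝ] ℝ) × ℝ => deriv (fun s => H z.1 z.2.1 s) z.2.2) := by
  rw [continuous_iff_continuousAt]
  intro z₀
  have hm : ContMDiffAt (I.prod 𝓘(ℝ, (E →L[ℝ] ℝ) × ℝ)) 𝓘(ℝ, ℝ) 3
      (fun q : M × ((E →L[ℝ] ℝ) × ℝ) => H q.1 q.2.1 q.2.2) z₀ := hC3.contMDiffAt
  rw [contMDiffAt_iff] at hm
  obtain ⟨-, hdiff⟩ := hm
  rw [(I.prod 𝓘(ℝ, (E →L[ℝ] ℝ) × ℝ)).range_eq_univ, contDiffWithinAt_univ] at hdiff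
  set e := extChartAt (I.prod 𝓘(ℝ, (E →L[ℝ] ℝ) × ℝ)) z₀ with he
  set G : E × ((E →L[ℝ] ℝ) × ℝ) → ℝ := (fun w : E × ((E →L[ℝ] ℝ) × ℝ) =>
    H ((e.symm w).1) ((e.symm w).2.1) ((e.symm w).2.2)) with hG
  have hdiff' : ContDiffAt ℝ 3 G (e z₀) := by
    have : (↑(extChartAt 𝓘(ℝ, ℝ) (H z₀.1 z₀.2.1 z₀.2.2)) ∘ (fun q : M × ((E →L[ℝ] ℝ) × ℝ) => H q.1 q.2.1 q.2.2)
        ∘ ↑(extChartAt (I.prod 𝓘(ℝ, (E →L[ℝ] ℝ) × ℝ)) z₀).symm) = G := by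
      funext w
      simp only [Function.comp_apply, extChartAt_model_space_eq_id, PartialEquiv.refl_coe, id_eq, G, e]
    rwa [this] at hdiff
  obtain ⟨u, hu_nhds, hGu⟩ := hdiff'.contDiffOn (le_refl _) (by simp)
  obtain ⟨U, hUu, hUopen, hUz⟩ := mem_nhds_iff.mp hu_nhds
  have hGU : ContDiffOn ℝ 3 G U := hGu.mono hUu
  have hfd : ContinuousOn (fderiv ℝ G) U :=
    hGU.continuousOn_fderiv_of_isOpen hUopen (by norm_num)
  set Ψ : E × ((E →L[ℝ] ℝ) × ℝ) → ℝ := fun w => fderiv ℝ G w ((0 : E), ((0 : E →L[ℝ] ℝ), (1 : ℝ))) with hΨ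
  have hΨc : ContinuousOn Ψ U := hfd.clm_apply continuousOn_const
  -- event
  have hWs : e.source ∈ 𝓝 z₀ := extChartAt_source_mem_nhds z₀
  have hWU : e ⁻¹' U ∈ 𝓝 z₀ := (continuousAt_extChartAt z₀) (hUopen.mem_nhds hUz)
  have heq : (fun z : M × ((E →L[ℝ] ℝ) × ℝ) => deriv (fun s => H z.1 z.2.1 s) z.2.2)
      =ᶠ[𝓝 z₀] (fun z => Ψ (e z)) := by
    filter_upwards [hWs, hWU] with z hzs hzU
    -- facts about the product chart
    have hprod : e = (extChartAt I z₀.1).prod (PartialEquiv.refl ((E →L[ℝ] ℝ) × ℝ)) := by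
      rw [he, extChartAt_prod, extChartAt_model_space_eq_id]
    have hz1 : z.1 ∈ (extChartAt I z₀.1).source := by
      rw [hprod] at hzs; exact hzs.1
    have hez : e z = (extChartAt I z₀.1 z.1, z.2) := by rw [hprod]; rfl
    -- the function of s
    have hfun : ∀ s : ℝ, H z.1 z.2.1 s = G (extChartAt I z₀.1 z.1, (z.2.1, s)) := by
      intro s
      have : e.symm (extChartAt I z₀.1 z.1, (z.2.1, s)) = (z.1, (z.2.1, s)) := by
        rw [hprod]
        simp only [PartialEquiv.prod_symm, PartialEquiv.prod_coe, PartialEquiv.refl_symm,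
          PartialEquiv.refl_coe, id_eq]
        rw [(extChartAt I z₀.1).left_inv hz1]
      show H z.1 z.2.1 s = H ((e.symm (extChartAt I z₀.1 z.1, (z.2.1, s))).1)
        ((e.symm (extChartAt I z₀.1 z.1, (z.2.1, s))).2.1)
        ((e.symm (extChartAt I z₀.1 z.1, (z.2.1, s))).2.2)
      rw [this]
    have hGdiff : DifferentiableAt ℝ G (e z) :=
      ((hGU.differentiableOn (by norm_num)).differentiableAt (hUopen.mem_nhds hzU))
    have hι : HasDerivAt (fun s : ℝ => ((extChartAt I z₀.1 z.1 : E), ((z.2.1 : E →L[ℝ] ℝ), s)))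
        (((0 : E), ((0 : E →L[ℝ] ℝ), (1:ℝ)))) z.2.2 :=
      (hasDerivAt_const _ _).prodMk ((hasDerivAt_const _ _).prodMk (hasDerivAt_id _))
    have hcomp : HasDerivAt (fun s : ℝ => G (extChartAt I z₀.1 z.1, (z.2.1, s)))
        (Ψ (e z)) z.2.2 := by
      have h1 : HasFDerivAt G (fderiv ℝ G (e z)) ((fun s : ℝ =>
          ((extChartAt I z₀.1 z.1 : E), ((z.2.1 : E →L[ℝ] ℝ), s))) z.2.2) := by
        show HasFDerivAt G (fderiv ℝ G (e z))
          ((extChartAt I z₀.1 z.1 : E), ((z.2.1 : E →L[ℝ] ℝ), z.2.2))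
        have hpt : ((extChartAt I z₀.1 z.1 : E), ((z.2.1 : E →L[ℝ] ℝ), z.2.2)) = e z := by
          rw [hez]
        rw [hpt]
        exact hGdiff.hasFDerivAt
      exact h1.comp_hasDerivAt _ hι
    have : (fun s : ℝ => H z.1 z.2.1 s) = fun s => G (extChartAt I z₀.1 z.1, (z.2.1, s)) :=
      funext hfun
    rw [this, hcomp.deriv]
  have hcont : ContinuousAt (fun z : M × ((E →L[ℝ] ℝ) × ℝ) => Ψ (e z)) z₀ := by
    have h1 : ContinuousAt Ψ (e z₀) := hΨc.continuousAt (hUopen.mem_nhds hUz)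
    exact h1.comp (continuousAt_extChartAt z₀)
  exact hcont.congr heq.symm



-- convexity along rays
lemma aux_ray_convex (hpr : ∀ x : M, ContDiff ℝ 3 (fun q : (E →L[ℝ] ℝ) × ℝ => H x q.1 q.2))
    (hH1 : CondH1 H) (x : M) (r : ℝ) (p : E →L[ℝ] ℝ) (hp : p ≠ 0) :
    ConvexOn ℝ univ (fun t : ℝ => H x (t • p) r) := by
  set f : (E →L[ℝ] ℝ) → ℝ := fun q => H x q r with hf0
  have hf : ContDiff ℝ 3 f := (hpr x).comp (contDiff_id.prodMk contDiff_const)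
  have hf1 : Differentiable ℝ f := hf.differentiable (by norm_num)
  have hf' : ContDiff ℝ 2 (fderiv ℝ f) := hf.fderiv_right (by norm_num)
  have hline : ∀ t : ℝ, HasDerivAt (fun s : ℝ => s • p) p t := fun t => by
    simpa using (hasDerivAt_id t).smul_const p
  set g : ℝ → ℝ := fun t => f (t • p) with hg0
  have hg : ∀ t, HasDerivAt g (fderiv ℝ f (t • p) p) t := fun t => by
    have h := (hf1 (t • p)).hasFDerivAt.comp_hasDerivAt t (hline t); exact h
  set g₁ : ℝ → ℝ := fun t => fderiv ℝ f (t • p) p with hg₁0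
  have hg₁ : ∀ t, HasDerivAt g₁ (fderiv ℝ (fderiv ℝ f) (t • p) p p) t := by
    intro t
    have h2 : HasDerivAt (fun t : ℝ => fderiv ℝ f (t • p))
        (fderiv ℝ (fderiv ℝ f) (t • p) p) t := by
      have := (hf'.differentiable (by norm_num) (t • p)).hasFDerivAt
      exact this.comp_hasDerivAt t (hline t)
    simpa using h2.clm_apply (hasDerivAt_const t p)
  have hderiv_g : deriv g = g₁ := funext fun t => (hg t).deriv
  have h2nonneg : ∀ t : ℝ, 0 ≤ deriv^[2] g t := by
    intro t
    have : deriv^[2] g t = deriv (deriv g) t := rfl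
    rw [this, hderiv_g, (hg₁ t).deriv]
    have := hH1 x r (t • p) p hp
    rw [iteratedFDeriv_two_apply] at this
    simp only [Matrix.cons_val_zero, Matrix.cons_val_one, Matrix.head_cons] at this
    exact le_of_lt this
  have hgc : Continuous g := by
    have : Differentiable ℝ g := fun t => (hg t).differentiableAt
    exact this.continuous
  refine convexOn_of_deriv2_nonneg convex_univ hgc.continuousOn ?_ ?_ ?_
  · intro t _
    exact ((hg t).differentiableAt).differentiableWithinAt
  · intro t _
    rw [hderiv_g]
    exact ((hg₁ t).differentiableAt).differentiableWithinAt
  · intro t _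
    exact h2nonneg t


-- uniform coercivity
lemma aux_coercive (hpr : ∀ x : M, ContDiff ℝ 3 (fun q : (E →L[ℝ] ℝ) × ℝ => H x q.1 q.2))
    (hcont : Continuous (fun z : M × (E →L[ℝ] ℝ) × ℝ => H z.1 z.2.1 z.2.2))
    (hH1 : CondH1 H) (hH2 : CondH2 H) (a b : ℝ) :
    ∃ R : ℝ, 0 < R ∧ ∀ (x : M) (p : E →L[ℝ] ℝ) (r : ℝ),
      r ∈ Icc a b → H x p r ≤ 1 → ‖p‖ ≤ R := by
  by_contra hcon
  push_neg at hcon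
  have hcon' : ∀ n : ℕ, ∃ (x : M) (p : E →L[ℝ] ℝ) (r : ℝ),
      r ∈ Icc a b ∧ H x p r ≤ 1 ∧ ((n : ℝ) + 1) < ‖p‖ := by
    intro n
    obtain ⟨x, p, r, hr, hH, hp⟩ := hcon ((n : ℝ) + 1) (by positivity)
    exact ⟨x, p, r, hr, hH, hp⟩
  choose xs ps rs hrs hHs hps using hcon'
  -- normalized momenta
  have hpsne : ∀ n, ps n ≠ 0 := by
    intro n hn
    have := hps n
    rw [hn] at this; simp at this; linarith [this, Nat.cast_nonneg (α := ℝ) n]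
  set qs : ℕ → (E →L[ℝ] ℝ) := fun n => ‖ps n‖⁻¹ • ps n with hqs
  have hqsmem : ∀ n, (xs n, qs n, rs n) ∈
      (univ : Set M) ×ˢ (Metric.sphere (0 : E →L[ℝ] ℝ) 1) ×ˢ (Icc a b) := by
    intro n
    refine ⟨mem_univ _, ?_, hrs n⟩
    simp only [mem_sphere_iff_norm, sub_zero, qs]
    rw [norm_smul ‖ps n‖⁻¹ (ps n), norm_inv, norm_norm,
      inv_mul_cancel₀ (norm_ne_zero_iff.mpr (hpsne n))]
  have hK : IsCompact ((univ : Set M) ×ˢ (Metric.sphere (0 : E →L[ℝ] ℝ) 1) ×ˢ (Icc a b)) :=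
    isCompact_univ.prod ((isCompact_sphere _ _).prod isCompact_Icc)
  obtain ⟨⟨x, q, r⟩, hzK, φ, hφ, hlim⟩ := hK.tendsto_subseq hqsmem
  obtain ⟨-, hq, hr⟩ := hzK
  -- superlinearity at the limit
  obtain ⟨C, hC⟩ := hH2 x r 1
  set s : ℝ := |C| + |H x (0 : E →L[ℝ] ℝ) r| + 1 with hs
  have hs_pos : 0 < s := by positivity
  -- convexity inequality along the subsequence
  have hconv : ∀ n, s / ‖ps (φ n)‖ ≤ 1 → H (xs (φ n)) (s • qs (φ n)) (rs (φ n)) ≤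
      (1 - s / ‖ps (φ n)‖) * H (xs (φ n)) 0 (rs (φ n)) + (s / ‖ps (φ n)‖) * 1 := by
    intro n hτ
    set τ : ℝ := s / ‖ps (φ n)‖ with hτ0
    have hτpos : 0 ≤ τ := by positivity
    have hcv := aux_ray_convex hpr hH1 (xs (φ n)) (rs (φ n)) (ps (φ n)) (hpsne (φ n))
    have h2 := hcv.2 (mem_univ (0 : ℝ)) (mem_univ (1 : ℝ)) (by linarith : (0:ℝ) ≤ 1 - τ)
      hτpos (by ring)
    simp only [smul_eq_mul, mul_zero, mul_one, zero_add, zero_smul, one_smul] at h2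
    have hτps : τ • ps (φ n) = s • qs (φ n) := by
      rw [hqs, smul_smul, hτ0, div_eq_mul_inv]
    calc H (xs (φ n)) (s • qs (φ n)) (rs (φ n))
        = H (xs (φ n)) (τ • ps (φ n)) (rs (φ n)) := by rw [hτps]
      _ ≤ (1 - τ) * H (xs (φ n)) 0 (rs (φ n)) + τ * H (xs (φ n)) (ps (φ n)) (rs (φ n)) := h2
      _ ≤ (1 - τ) * H (xs (φ n)) 0 (rs (φ n)) + τ * 1 := by
          have := hHs (φ n)
          nlinarith [hτpos]
  -- limits
  have hxs : Tendsto (fun n => xs (φ n)) atTop (𝓝 x) :=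
    (continuous_fst.tendsto _).comp hlim
  have hqlim : Tendsto (fun n => qs (φ n)) atTop (𝓝 q) :=
    ((continuous_fst.comp continuous_snd).tendsto _).comp hlim
  have hrlim : Tendsto (fun n => rs (φ n)) atTop (𝓝 r) :=
    ((continuous_snd.comp continuous_snd).tendsto _).comp hlim
  have hnorm_lim : Tendsto (fun n => ‖ps (φ n)‖) atTop atTop := by
    apply tendsto_atTop_mono (fun n => ?_) tendsto_natCast_atTop_atTop
    have h1 : (n : ℝ) ≤ (φ n : ℝ) := by exact_mod_cast hφ.le_apply
    have := hps (φ n)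
    linarith
  have hτlim : Tendsto (fun n => s / ‖ps (φ n)‖) atTop (𝓝 0) :=
    Tendsto.div_atTop tendsto_const_nhds hnorm_lim
  -- eventually τ ≤ 1
  have hev : ∀ᶠ n in atTop, s / ‖ps (φ n)‖ ≤ 1 := by
    filter_upwards [hnorm_lim.eventually_ge_atTop s] with n hn
    have hpos : (0:ℝ) < ‖ps (φ n)‖ := by
      have h1 := hps (φ n)
      have h2 : (0:ℝ) ≤ (φ n : ℝ) := Nat.cast_nonneg _
      linarith
    rw [div_le_one hpos]; exact hn
  -- limit of LHS
  have hLHS : Tendsto (fun n => H (xs (φ n)) (s • qs (φ n)) (rs (φ n))) atTop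
      (𝓝 (H x (s • q) r)) := by
    have htup : Tendsto (fun n => ((xs (φ n), (s • qs (φ n), rs (φ n)))
        : M × (E →L[ℝ] ℝ) × ℝ)) atTop (𝓝 (x, (s • q, r))) :=
      hxs.prodMk_nhds ((hqlim.const_smul s).prodMk_nhds hrlim)
    exact (hcont.tendsto _).comp htup
  -- limit of RHS
  have hH0 : Tendsto (fun n => H (xs (φ n)) 0 (rs (φ n))) atTop (𝓝 (H x 0 r)) := by
    have htup : Tendsto (fun n => ((xs (φ n), ((0 : E →L[ℝ] ℝ), rs (φ n)))
        : M × (E →L[ℝ] ℝ) × ℝ)) atTop (𝓝 (x, (0, r))) :=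
      hxs.prodMk_nhds (tendsto_const_nhds.prodMk_nhds hrlim)
    exact (hcont.tendsto _).comp htup
  have hRHS : Tendsto (fun n => (1 - s / ‖ps (φ n)‖) * H (xs (φ n)) 0 (rs (φ n))
      + (s / ‖ps (φ n)‖) * 1) atTop (𝓝 ((1 - 0) * H x 0 r + 0 * 1)) :=
    ((tendsto_const_nhds.sub hτlim).mul hH0).add (hτlim.mul tendsto_const_nhds)
  have hfinal : H x (s • q) r ≤ (1 - 0) * H x 0 r + 0 * 1 := by
    refine le_of_tendsto_of_tendsto hLHS hRHS ?_
    filter_upwards [hev] with n hn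
    exact hconv n hn
  have hnq : ‖q‖ = 1 := by simpa using hq
  have hsq : ‖s • q‖ = s := by
    rw [norm_smul s q, hnq, Real.norm_eq_abs, abs_of_pos hs_pos, mul_one]
  have h1 := hC (s • q)
  rw [hsq] at h1
  have habs := le_abs_self (H x 0 r)
  simp only [one_mul, zero_mul, add_zero, sub_zero] at hfinal
  rw [hs] at h1
  have hC1 := le_abs_self C
  linarith


-- lambda extraction
lemma aux_lambda
    (hcont : Continuous (fun z : M × (E →L[ℝ] ℝ) × ℝ => H z.1 z.2.1 z.2.2))
    (hcontD : Continuous (fun z : M × (E →L[ℝ] ℝ) × ℝ => deriv (fun s => H z.1 z.2.1 s) z.2.2))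
    (hA1 : CondA1 H) (a b R : ℝ) :
    ∃ δ₁ : ℝ, 0 < δ₁ ∧ ∃ lam : ℝ, 0 < lam ∧ ∀ (x : M) (p : E →L[ℝ] ℝ) (r : ℝ),
      ‖p‖ ≤ R → r ∈ Icc a b → |H x p r| ≤ δ₁ → lam ≤ deriv (fun s => H x p s) r := by
  by_contra hcon
  push_neg at hcon
  have hcon' : ∀ n : ℕ, ∃ z : M × (E →L[ℝ] ℝ) × ℝ,
      ‖z.2.1‖ ≤ R ∧ z.2.2 ∈ Icc a b ∧ |H z.1 z.2.1 z.2.2| ≤ 1 / (n + 1) ∧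
      deriv (fun s => H z.1 z.2.1 s) z.2.2 < 1 / (n + 1) := by
    intro n
    obtain ⟨x, p, r, hp, hr, hH, hD⟩ := hcon (1 / (n + 1)) (by positivity) (1 / (n + 1))
      (by positivity)
    exact ⟨(x, p, r), hp, hr, hH, hD⟩
  choose zs hz1 hz2 hz3 hz4 using hcon'
  have hK : IsCompact ((univ : Set M) ×ˢ (Metric.closedBall (0 : E →L[ℝ] ℝ) (max R 0))
      ×ˢ (Icc a b)) :=
    isCompact_univ.prod ((isCompact_closedBall _ _).prod isCompact_Icc)
  have hmem : ∀ n, zs n ∈ (univ : Set M) ×ˢ (Metric.closedBall (0 : E →L[ℝ] ℝ) (max R 0))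
      ×ˢ (Icc a b) := by
    intro n
    refine ⟨mem_univ _, ?_, hz2 n⟩
    rw [Metric.mem_closedBall, dist_zero_right]
    exact le_trans (hz1 n) (le_max_left _ _)
  obtain ⟨z, hzK, φ, hφ, hlim⟩ := hK.tendsto_subseq hmem
  have hrate : Tendsto (fun n : ℕ => 1 / ((φ n : ℝ) + 1)) atTop (𝓝 0) := by
    exact tendsto_one_div_add_atTop_nhds_zero_nat.comp hφ.tendsto_atTop
  have hHz : H z.1 z.2.1 z.2.2 = 0 := by
    have h1 : Tendsto (fun n => H (zs (φ n)).1 (zs (φ n)).2.1 (zs (φ n)).2.2) atTop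
        (𝓝 (H z.1 z.2.1 z.2.2)) := (hcont.tendsto _).comp hlim
    have h2 : Tendsto (fun n => H (zs (φ n)).1 (zs (φ n)).2.1 (zs (φ n)).2.2) atTop (𝓝 0) := by
      apply squeeze_zero_norm (fun n => ?_) hrate
      rw [Real.norm_eq_abs]
      exact hz3 (φ n)
    exact tendsto_nhds_unique h1 h2
  have hDz : deriv (fun s => H z.1 z.2.1 s) z.2.2 ≤ 0 := by
    have h1 : Tendsto (fun n => deriv (fun s => H (zs (φ n)).1 (zs (φ n)).2.1 s) (zs (φ n)).2.2)
        atTop (𝓝 (deriv (fun s => H z.1 z.2.1 s) z.2.2)) := (hcontD.tendsto _).comp hlim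
    refine le_of_tendsto_of_tendsto h1 hrate ?_
    filter_upwards with n
    exact le_of_lt (hz4 (φ n))
  exact absurd (hA1 z.1 z.2.1 z.2.2 hHz) (not_lt.mpr hDz)

lemma aux_bound_above {g g' : ℝ → ℝ} {s t K : ℝ} (hst : s ≤ t)
    (hd : ∀ u, HasDerivAt g (g' u) u) (hb : ∀ u ∈ Icc s t, g' u ≤ K) :
    g t ≤ g s + K * (t - s) := by
  set h : ℝ → ℝ := fun u => g u - K * u with hh
  have hdh : ∀ u, HasDerivAt h (g' u - K) u := by
    intro u
    have := (hd u).sub ((hasDerivAt_id u).const_mul K)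
    rw [mul_one] at this; exact this
  have hanti : AntitoneOn h (Icc s t) := by
    refine antitoneOn_of_deriv_nonpos (convex_Icc s t) ?_ ?_ ?_
    · exact (Differentiable.continuous (fun u => (hdh u).differentiableAt)).continuousOn
    · exact fun u _ => (hdh u).differentiableAt.differentiableWithinAt
    · intro u hu
      rw [interior_Icc] at hu
      rw [(hdh u).deriv]
      have := hb u (Ioo_subset_Icc_self hu)
      linarith
  have := hanti (left_mem_Icc.mpr hst) (right_mem_Icc.mpr hst) hst
  simp only [hh] at this
  nlinarith
lemma aux_bound_below {g g' : ℝ → ℝ} {s t K : ℝ} (hst : s ≤ t)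
    (hd : ∀ u, HasDerivAt g (g' u) u) (hb : ∀ u ∈ Icc s t, K ≤ g' u) :
    g s + K * (t - s) ≤ g t := by
  have := aux_bound_above (g := fun u => -g u) (g' := fun u => -(g' u)) (K := -K) hst
    (fun u => (hd u).neg) (fun u hu => by simpa using hb u hu)
  nlinarith

end AuxLemmas

/-- under (H1)–(H3) and (A1), for a viscosity solution `u₋` there are
`δ₀ > 0`, `m > 0` such that `ω₁(x,t) = u₋(x) − δ₀e^{−mt}` is a viscosity subsolution and
`ω₂(x,t) = u₋(x) + δ₀e^{−mt}` a viscosity supersolution of `∂ₜw + H(x,∂ₓw,w) = 0`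
on `M × (0,∞)`. -/
theorem statement2
    (H : M → (E →L[ℝ] ℝ) → ℝ → ℝ)
    (hC3 : CondC3 I H) (hH1 : CondH1 H) (hH2 : CondH2 H) (hH3 : CondH3 H)
    (hA1 : CondA1 H)
    (um : M → ℝ) (hum : um ∈ Sminus I H) :
    ∃ δ₀ : ℝ, 0 < δ₀ ∧ ∃ m : ℝ, 0 < m ∧
      IsVSubEvol I H (fun x t => um x - δ₀ * Real.exp (-m * t)) ∧
      IsVSupEvol I H (fun x t => um x + δ₀ * Real.exp (-m * t)) := by
  classical
  obtain ⟨hsubst, hsupst⟩ := hum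
  obtain ⟨κ, hκ, hH3'⟩ := hH3
  have humc : Continuous um := hsubst.1
  have hpr : ∀ x : M, ContDiff ℝ 3 (fun q : (E →L[ℝ] ℝ) × ℝ => H x q.1 q.2) :=
    aux_contDiff_pr hC3
  have hcont : Continuous (fun z : M × (E →L[ℝ] ℝ) × ℝ => H z.1 z.2.1 z.2.2) :=
    aux_cont hC3
  have hcontD : Continuous
      (fun z : M × (E →L[ℝ] ℝ) × ℝ => deriv (fun s => H z.1 z.2.1 s) z.2.2) := aux_contD hC3
  have hdHr : ∀ (x : M) (p : E →L[ℝ] ℝ) (s : ℝ),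
      HasDerivAt (fun s' => H x p s') (deriv (fun s' => H x p s') s) s := by
    intro x p s
    have h1 : ContDiff ℝ 3 (fun s' : ℝ => H x p s') :=
      (hpr x).comp (contDiff_const.prodMk contDiff_id)
    exact ((h1.differentiable (by norm_num)) s).hasDerivAt
  -- bound on um
  obtain ⟨x₁, -, hx₁⟩ := IsCompact.exists_isMaxOn isCompact_univ univ_nonempty
    ((continuous_abs.comp humc).continuousOn)
  set b₀ : ℝ := |um x₁| with hb₀def
  have hb₀0 : 0 ≤ b₀ := abs_nonneg _
  have humbd : ∀ x : M, |um x| ≤ b₀ := fun x => hx₁ (mem_univ x)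
  set a : ℝ := -b₀ - 1 with hadef
  set b : ℝ := b₀ + 1 with hbdef
  have humIcc : ∀ (x : M) (s : ℝ), |s| ≤ 1 → um x + s ∈ Icc a b := by
    intro x s hs
    have h1 := humbd x
    rw [abs_le] at h1 hs
    exact ⟨by simp only [hadef]; linarith, by simp only [hbdef]; linarith⟩
  obtain ⟨R, hR, hRp⟩ := aux_coercive hpr hcont hH1 hH2 a b
  obtain ⟨δ₁0, hδ₁0, lam, hlam, hlamp⟩ := aux_lambda hcont hcontD hA1 a b R
  set δ₁ : ℝ := min δ₁0 1 with hδ₁def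
  have hδ₁pos : 0 < δ₁ := lt_min hδ₁0 one_pos
  have hδ₁le1 : δ₁ ≤ 1 := min_le_right _ _
  have hδ₁le : δ₁ ≤ δ₁0 := min_le_left _ _
  set δ₀ : ℝ := min 1 (δ₁ / (2 * κ)) with hδ₀def
  have hδ₀pos : 0 < δ₀ := lt_min one_pos (by positivity)
  have hδ₀le1 : δ₀ ≤ 1 := min_le_left _ _
  have hκδ₀ : κ * δ₀ ≤ δ₁ / 2 := by
    have h1 : δ₀ ≤ δ₁ / (2 * κ) := min_le_right _ _
    have h2 : κ * δ₀ ≤ κ * (δ₁ / (2 * κ)) := mul_le_mul_of_nonneg_left h1 hκ.le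
    calc κ * δ₀ ≤ κ * (δ₁ / (2 * κ)) := h2
      _ = δ₁ / 2 := by field_simp
  set m : ℝ := min lam (δ₁ / (2 * δ₀)) with hmdef
  have hmpos : 0 < m := lt_min hlam (by positivity)
  have hmlam : m ≤ lam := min_le_left _ _
  have hmδ₀ : m * δ₀ ≤ δ₁ / 2 := by
    calc m * δ₀ ≤ (δ₁ / (2 * δ₀)) * δ₀ :=
          mul_le_mul_of_nonneg_right (min_le_right _ _) hδ₀pos.le
      _ = δ₁ / 2 := by field_simp
  -- the two key estimates
  have key1 : ∀ (x : M) (p : E →L[ℝ] ℝ) (ε : ℝ), 0 < ε → ε ≤ δ₀ →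
      H x p (um x) ≤ 0 → H x p (um x - ε) ≤ -(m * ε) := by
    intro x p ε hε hεδ hH0
    have humab : um x ∈ Icc a b := by simpa using humIcc x 0 (by norm_num)
    have hpR : ‖p‖ ≤ R := hRp x p (um x) humab (le_trans hH0 one_pos.le)
    set g : ℝ → ℝ := fun s => H x p (um x - s) with hgdef
    set g' : ℝ → ℝ := fun s => -(deriv (fun r => H x p r) (um x - s)) with hg'def
    have hg : ∀ s, HasDerivAt g (g' s) s := by
      intro s
      have h2 : HasDerivAt (fun s' : ℝ => um x - s') (-1) s := by
        exact (hasDerivAt_id s).const_sub (um x)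
      have := (hdHr x p (um x - s)).comp s h2
      rw [mul_neg_one] at this; exact this
    have hg'bd : ∀ s : ℝ, |g' s| ≤ κ := by
      intro s
      rw [hg'def, abs_neg]
      exact hH3' x p (um x - s)
    have hg0 : g 0 ≤ 0 := by simpa [hgdef] using hH0
    by_cases hcase : ∃ s ∈ Icc (0:ℝ) ε, g s ≤ -δ₁
    · obtain ⟨s, hs, hgs⟩ := hcase
      have hup := aux_bound_above hs.2 hg (fun u _ => (abs_le.mp (hg'bd u)).2)
      have hsc : κ * (ε - s) ≤ κ * δ₀ := by
        have := hs.1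
        exact mul_le_mul_of_nonneg_left (by linarith) hκ.le
      have hmε : m * ε ≤ δ₁ / 2 := le_trans
        (mul_le_mul_of_nonneg_left hεδ hmpos.le) hmδ₀
      have : g ε ≤ -(m * ε) := by linarith
      simpa [hgdef] using this
    · push_neg at hcase
      have hub : ∀ s ∈ Icc (0:ℝ) ε, g s ≤ δ₁ / 2 := by
        intro s hs
        have hup := aux_bound_above hs.1 hg (fun u hu =>
          (abs_le.mp (hg'bd u)).2)
        have : κ * (s - 0) ≤ κ * δ₀ := mul_le_mul_of_nonneg_left (by linarith [hs.2]) hκ.le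
        linarith
      have hderiv : ∀ s ∈ Icc (0:ℝ) ε, g' s ≤ -lam := by
        intro s hs
        have habs : |H x p (um x - s)| ≤ δ₁ := by
          rw [abs_le]
          constructor
          · exact le_of_lt (hcase s hs)
          · exact le_trans (hub s hs) (by linarith)
        have hmem : um x - s ∈ Icc a b := by
          have := humIcc x (-s) (by rw [abs_neg, abs_of_nonneg hs.1]; linarith [hs.2])
          simpa [sub_eq_add_neg] using this
        have := hlamp x p (um x - s) hpR hmem (le_trans habs hδ₁le)
        simp only [hg'def]
        linarith
      have hlow := aux_bound_above (le_of_lt hε) hg hderiv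
      have hlε : m * ε ≤ lam * ε := mul_le_mul_of_nonneg_right hmlam hε.le
      have : g ε ≤ -(m * ε) := by nlinarith
      simpa [hgdef] using this
  have key2 : ∀ (x : M) (p : E →L[ℝ] ℝ) (ε : ℝ), 0 < ε → ε ≤ δ₀ →
      0 ≤ H x p (um x) → m * ε ≤ H x p (um x + ε) := by
    intro x p ε hε hεδ hH0
    set g : ℝ → ℝ := fun s => H x p (um x + s) with hgdef
    set g' : ℝ → ℝ := fun s => deriv (fun r => H x p r) (um x + s) with hg'def
    have hg : ∀ s, HasDerivAt g (g' s) s := by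
      intro s
      have h2 : HasDerivAt (fun s' : ℝ => um x + s') 1 s := by
        exact ((hasDerivAt_const s (um x)).add (hasDerivAt_id s)).congr_deriv (zero_add 1)
      have := (hdHr x p (um x + s)).comp s h2
      rw [mul_one] at this; exact this
    have hg'bd : ∀ s : ℝ, |g' s| ≤ κ := fun s => hH3' x p (um x + s)
    have hg0 : 0 ≤ g 0 := by simpa [hgdef] using hH0
    have hmε : m * ε ≤ δ₁ / 2 := le_trans (mul_le_mul_of_nonneg_left hεδ hmpos.le) hmδ₀
    by_cases hcase : ∃ s ∈ Icc (0:ℝ) ε, δ₁ ≤ g s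
    · obtain ⟨s, hs, hgs⟩ := hcase
      have hlow := aux_bound_below hs.2 hg (fun u _ => (abs_le.mp (hg'bd u)).1)
      have hsc : -κ * (ε - s) ≥ -(κ * δ₀) := by
        have := hs.1
        nlinarith
      have : m * ε ≤ g ε := by nlinarith
      simpa [hgdef] using this
    · push_neg at hcase
      have hpR : ‖p‖ ≤ R := by
        have h0 : g 0 < δ₁ := hcase 0 ⟨le_refl 0, hε.le⟩
        have h0' : g 0 = H x p (um x) := by simp [hgdef]
        refine hRp x p (um x) (by simpa using humIcc x 0 (by norm_num)) ?_
        linarith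
      have hlb : ∀ s ∈ Icc (0:ℝ) ε, -(δ₁ / 2) ≤ g s := by
        intro s hs
        have hlow := aux_bound_below hs.1 hg (fun u _ => (abs_le.mp (hg'bd u)).1)
        have : -κ * (s - 0) ≥ -(κ * δ₀) := by nlinarith [hs.2]
        linarith
      have hderiv : ∀ s ∈ Icc (0:ℝ) ε, lam ≤ g' s := by
        intro s hs
        have habs : |H x p (um x + s)| ≤ δ₁ := by
          rw [abs_le]
          constructor
          · have := hlb s hs; show -δ₁ ≤ g s; linarith
          · exact le_of_lt (hcase s hs)
        have hmem : um x + s ∈ Icc a b :=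
          humIcc x s (by rw [abs_of_nonneg hs.1]; linarith [hs.2])
        exact hlamp x p (um x + s) hpR hmem (le_trans habs hδ₁le)
      have hlow := aux_bound_below (le_of_lt hε) hg hderiv
      have hlε : m * ε ≤ lam * ε := mul_le_mul_of_nonneg_right hmlam hε.le
      have : m * ε ≤ g ε := by nlinarith
      simpa [hgdef] using this
  -- assemble
  refine ⟨δ₀, hδ₀pos, m, hmpos, ⟨?_, ?_⟩, ⟨?_, ?_⟩⟩
  · exact ((humc.comp continuous_fst).sub (continuous_const.mul
      (Real.continuous_exp.comp (continuous_const.mul continuous_snd)))).continuousOn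
  · -- subsolution
    intro ψ hψ x₀ t₀ ht₀ hmax
    show deriv (fun s => ψ x₀ s) t₀ +
      H x₀ (mfderiv I 𝓘(ℝ, ℝ) (fun y => ψ y t₀) x₀) (um x₀ - δ₀ * Real.exp (-m * t₀)) ≤ 0
    set ε : ℝ := δ₀ * Real.exp (-m * t₀) with hεdef
    have hεpos : 0 < ε := by positivity
    have hεle : ε ≤ δ₀ := by
      have h1 : Real.exp (-m * t₀) ≤ 1 := Real.exp_le_one_iff.mpr (by nlinarith)
      nlinarith
    set φ : M → ℝ := fun y => ψ y t₀ with hφdef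
    have hφ : ContMDiff I 𝓘(ℝ, ℝ) 1 φ :=
      hψ.comp (contMDiff_id.prodMk contMDiff_const)
    have hmax_x : IsLocalMax (fun y => um y - φ y) x₀ := by
      have ht : Tendsto (fun y : M => (y, t₀)) (𝓝 x₀) (𝓝 (x₀, t₀)) :=
        (continuous_id.prodMk continuous_const).tendsto x₀
      have h2 := hmax.comp_tendsto (g := fun y : M => (y, t₀)) ht
      refine h2.mono fun y hy => ?_
      simp only [Function.comp] at hy ⊢
      linarith [hy]
    have hstat := hsubst.2 φ hφ x₀ hmax_x
    have hψt : DifferentiableAt ℝ (fun s => ψ x₀ s) t₀ := by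
      have h1 : ContMDiff 𝓘(ℝ, ℝ) 𝓘(ℝ, ℝ) 1 (fun s => ψ x₀ s) :=
        hψ.comp (contMDiff_const.prodMk contMDiff_id)
      exact ((contMDiff_iff_contDiff.mp h1).differentiable one_ne_zero).differentiableAt
    have hexp : HasDerivAt (fun t => um x₀ - δ₀ * Real.exp (-m * t)) (m * ε) t₀ := by
      have hmt : HasDerivAt (fun t : ℝ => -m * t) (-m) t₀ := by
        simpa using (hasDerivAt_id t₀).const_mul (-m)
      have hexp0 := (Real.hasDerivAt_exp (-m * t₀)).comp t₀ hmt
      have := (hasDerivAt_const t₀ (um x₀)).sub (hexp0.const_mul δ₀)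
      exact this.congr_deriv (by rw [hεdef]; ring)
    have hmax_t : IsLocalMax (fun t => (um x₀ - δ₀ * Real.exp (-m * t)) - ψ x₀ t) t₀ := by
      have ht : Tendsto (fun t : ℝ => (x₀, t)) (𝓝 t₀) (𝓝 (x₀, t₀)) :=
        (continuous_const.prodMk continuous_id).tendsto t₀
      have h2 := hmax.comp_tendsto (g := fun t : ℝ => (x₀, t)) ht
      refine h2.mono fun t htt => ?_
      simp only [Function.comp] at htt ⊢
      linarith [htt]
    have hd0 : deriv (fun t => (um x₀ - δ₀ * Real.exp (-m * t)) - ψ x₀ t) t₀ = 0 :=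
      hmax_t.deriv_eq_zero
    have hψd : deriv (fun s => ψ x₀ s) t₀ = m * ε := by
      have h1 : deriv (fun t => (um x₀ - δ₀ * Real.exp (-m * t)) - ψ x₀ t) t₀ =
          m * ε - deriv (fun s => ψ x₀ s) t₀ := (hexp.sub hψt.hasDerivAt).deriv
      rw [hd0] at h1
      linarith [h1]
    have hkey := key1 x₀ (mfderiv I 𝓘(ℝ, ℝ) φ x₀) ε hεpos hεle hstat
    rw [hψd]
    linarith
  · exact ((humc.comp continuous_fst).add (continuous_const.mul
      (Real.continuous_exp.comp (continuous_const.mul continuous_snd)))).continuousOn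
  · -- supersolution
    intro ψ hψ x₀ t₀ ht₀ hmin
    show 0 ≤ deriv (fun s => ψ x₀ s) t₀ +
      H x₀ (mfderiv I 𝓘(ℝ, ℝ) (fun y => ψ y t₀) x₀) (um x₀ + δ₀ * Real.exp (-m * t₀))
    set ε : ℝ := δ₀ * Real.exp (-m * t₀) with hεdef
    have hεpos : 0 < ε := by positivity
    have hεle : ε ≤ δ₀ := by
      have h1 : Real.exp (-m * t₀) ≤ 1 := Real.exp_le_one_iff.mpr (by nlinarith)
      nlinarith
    set φ : M → ℝ := fun y => ψ y t₀ with hφdef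
    have hφ : ContMDiff I 𝓘(ℝ, ℝ) 1 φ :=
      hψ.comp (contMDiff_id.prodMk contMDiff_const)
    have hmin_x : IsLocalMin (fun y => um y - φ y) x₀ := by
      have ht : Tendsto (fun y : M => (y, t₀)) (𝓝 x₀) (𝓝 (x₀, t₀)) :=
        (continuous_id.prodMk continuous_const).tendsto x₀
      have h2 := hmin.comp_tendsto (g := fun y : M => (y, t₀)) ht
      refine h2.mono fun y hy => ?_
      simp only [Function.comp] at hy ⊢
      linarith [hy]
    have hstat := hsupst.2 φ hφ x₀ hmin_x
    have hψt : DifferentiableAt ℝ (fun s => ψ x₀ s) t₀ := by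
      have h1 : ContMDiff 𝓘(ℝ, ℝ) 𝓘(ℝ, ℝ) 1 (fun s => ψ x₀ s) :=
        hψ.comp (contMDiff_const.prodMk contMDiff_id)
      exact ((contMDiff_iff_contDiff.mp h1).differentiable one_ne_zero).differentiableAt
    have hexp : HasDerivAt (fun t => um x₀ + δ₀ * Real.exp (-m * t)) (-(m * ε)) t₀ := by
      have hmt : HasDerivAt (fun t : ℝ => -m * t) (-m) t₀ := by
        simpa using (hasDerivAt_id t₀).const_mul (-m)
      have hexp0 := (Real.hasDerivAt_exp (-m * t₀)).comp t₀ hmt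
      have := (hasDerivAt_const t₀ (um x₀)).add (hexp0.const_mul δ₀)
      exact this.congr_deriv (by rw [hεdef]; ring)
    have hmin_t : IsLocalMin (fun t => (um x₀ + δ₀ * Real.exp (-m * t)) - ψ x₀ t) t₀ := by
      have ht : Tendsto (fun t : ℝ => (x₀, t)) (𝓝 t₀) (𝓝 (x₀, t₀)) :=
        (continuous_const.prodMk continuous_id).tendsto t₀
      have h2 := hmin.comp_tendsto (g := fun t : ℝ => (x₀, t)) ht
      refine h2.mono fun t htt => ?_
      simp only [Function.comp] at htt ⊢
      linarith [htt]
    have hd0 : deriv (fun t => (um x₀ + δ₀ * Real.exp (-m * t)) - ψ x₀ t) t₀ = 0 :=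
      hmin_t.deriv_eq_zero
    have hψd : deriv (fun s => ψ x₀ s) t₀ = -(m * ε) := by
      have h1 : deriv (fun t => (um x₀ + δ₀ * Real.exp (-m * t)) - ψ x₀ t) t₀ =
          -(m * ε) - deriv (fun s => ψ x₀ s) t₀ := (hexp.sub hψt.hasDerivAt).deriv
      rw [hd0] at h1
      linarith [h1]
    have hkey := key2 x₀ (mfderiv I 𝓘(ℝ, ℝ) φ x₀) ε hεpos hεle hstat
    rw [hψd]
    linarith
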